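/- arXiv:1203.6055 — 2 statements merged into one kernel-verified Lean document; each statement's English description precedes it below -/
import Mathlib

section
/- For all integers M, N, K (with y invertible), L_M(x,y)·F_N(x,y) − L_{M+K}(x,y)·F_{N−K}(x,y) = (−y)^{N−K} · L_{M+K−N}(x,y) · F_K(x,y). -/
/-- Bivariate Fibonacci polynomials. -/
def bF {K : Type*} [Field K] (x y : K) : ℕ → K
  | 0 => 0
  | 1 => 1
  | n + 2 => x * bF x y (n + 1) + y * bF x y n

/-- Bivariate Lucas polynomials. -/
def bL {K : Type*} [Field K] (x y : K) : ℕ → K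
  | 0 => 2
  | 1 => x
  | n + 2 => x * bL x y (n + 1) + y * bL x y n

/-- Bivariate Fibonacci polynomials extended to all integer indices. -/
noncomputable def zF {K : Type*} [Field K] (x y : K) (n : ℤ) : K :=
  if 0 ≤ n then bF x y n.toNat else -((-y) ^ n) * bF x y (-n).toNat

/-- Bivariate Lucas polynomials extended to all integer indices:
L_{-n} = (-y)^{-n} L_n. -/
noncomputable def zL {K : Type*} [Field K] (x y : K) (n : ℤ) : K :=
  if 0 ≤ n then bL x y n.toNat else (-y) ^ n * bL x y (-n).toNat

section Aux
variable {K : Type*} [Field K] (x y : K)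

lemma zF_natCast (m : ℕ) : zF x y (m : ℤ) = bF x y m := by simp [zF]

lemma zL_natCast (m : ℕ) : zL x y (m : ℤ) = bL x y m := by simp [zL]

lemma zF_neg_nat (m : ℕ) : zF x y (-(m : ℤ)) = -(-y) ^ (-(m : ℤ)) * bF x y m := by
  cases m with
  | zero => simp [zF, bF]
  | succ n =>
    have h : ¬ (0 : ℤ) ≤ -((n : ℤ) + 1) := by omega
    simp only [zF, Nat.cast_add, Nat.cast_one, h, if_false, neg_neg]
    norm_num

lemma zL_neg_nat (m : ℕ) : zL x y (-(m : ℤ)) = (-y) ^ (-(m : ℤ)) * bL x y m := by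
  cases m with
  | zero => simp [zL, bL]
  | succ n =>
    have h : ¬ (0 : ℤ) ≤ -((n : ℤ) + 1) := by omega
    simp only [zL, Nat.cast_add, Nat.cast_one, h, if_false, neg_neg]
    norm_num

variable (hy : y ≠ 0)
include hy

lemma hny : (-y : K) ≠ 0 := neg_ne_zero.mpr hy

lemma zF_rec (n : ℤ) : zF x y (n + 2) = x * zF x y (n + 1) + y * zF x y n := by
  have hny : (-y : K) ≠ 0 := neg_ne_zero.mpr hy
  obtain ⟨m, rfl | rfl⟩ := Int.eq_nat_or_neg n
  · have e2 : ((m : ℤ) + 2) = ((m + 2 : ℕ) : ℤ) := by push_cast; ring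
    have e1 : ((m : ℤ) + 1) = ((m + 1 : ℕ) : ℤ) := by push_cast; ring
    rw [e2, e1, zF_natCast, zF_natCast, zF_natCast]
    rfl
  · match m with
    | 0 =>
      norm_num [zF, bF]
      rw [show Int.toNat 2 = 2 from rfl]
      simp [bF]
    | 1 =>
      norm_num [zF, bF]
      field_simp
    | (m + 2) =>
      have e0 : (-((m:ℤ) + 2) + 2) = -(m : ℤ) := by ring
      have e1 : (-((m:ℤ) + 2) + 1) = -((m + 1 : ℕ) : ℤ) := by push_cast; ring
      have e2 : (-((m + 2 : ℕ) : ℤ)) = -((m + 2 : ℕ) : ℤ) := rfl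
      push_cast
      rw [e0, e1, show -((m:ℤ)+2) = -((m + 2 : ℕ) : ℤ) by push_cast; ring,
        zF_neg_nat, zF_neg_nat, zF_neg_nat]
      have hb : bF x y (m + 2) = x * bF x y (m + 1) + y * bF x y m := rfl
      have p1 : (-y : K) ^ (-((m + 1 : ℕ) : ℤ)) = (-y) ^ (-(m : ℤ)) * (-y)⁻¹ := by
        rw [show (-((m + 1 : ℕ) : ℤ)) = -(m:ℤ) - 1 by push_cast; ring, zpow_sub_one₀ hny]
      have p2 : (-y : K) ^ (-((m + 2 : ℕ) : ℤ)) = (-y) ^ (-(m : ℤ)) * (-y)⁻¹ * (-y)⁻¹ := by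
        rw [show (-((m + 2 : ℕ) : ℤ)) = (-(m:ℤ) - 1) - 1 by push_cast; ring,
          zpow_sub_one₀ hny, zpow_sub_one₀ hny]
      rw [p1, p2, hb]
      generalize (-y : K) ^ (-(m : ℤ)) = u
      field_simp
      ring

lemma zL_rec (n : ℤ) : zL x y (n + 2) = x * zL x y (n + 1) + y * zL x y n := by
  have hny : (-y : K) ≠ 0 := neg_ne_zero.mpr hy
  obtain ⟨m, rfl | rfl⟩ := Int.eq_nat_or_neg n
  · have e2 : ((m : ℤ) + 2) = ((m + 2 : ℕ) : ℤ) := by push_cast; ring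
    have e1 : ((m : ℤ) + 1) = ((m + 1 : ℕ) : ℤ) := by push_cast; ring
    rw [e2, e1, zL_natCast, zL_natCast, zL_natCast]
    rfl
  · match m with
    | 0 =>
      norm_num [zL, bL]
      rw [show Int.toNat 2 = 2 from rfl]
      simp [bL]
    | 1 =>
      norm_num [zL, bL]
      field_simp
      ring
    | (m + 2) =>
      have e0 : (-((m:ℤ) + 2) + 2) = -(m : ℤ) := by ring
      have e1 : (-((m:ℤ) + 2) + 1) = -((m + 1 : ℕ) : ℤ) := by push_cast; ring
      push_cast
      rw [e0, e1, show -((m:ℤ)+2) = -((m + 2 : ℕ) : ℤ) by push_cast; ring,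
        zL_neg_nat, zL_neg_nat, zL_neg_nat]
      have hb : bL x y (m + 2) = x * bL x y (m + 1) + y * bL x y m := rfl
      have p1 : (-y : K) ^ (-((m + 1 : ℕ) : ℤ)) = (-y) ^ (-(m : ℤ)) * (-y)⁻¹ := by
        rw [show (-((m + 1 : ℕ) : ℤ)) = -(m:ℤ) - 1 by push_cast; ring, zpow_sub_one₀ hny]
      have p2 : (-y : K) ^ (-((m + 2 : ℕ) : ℤ)) = (-y) ^ (-(m : ℤ)) * (-y)⁻¹ * (-y)⁻¹ := by
        rw [show (-((m + 2 : ℕ) : ℤ)) = (-(m:ℤ) - 1) - 1 by push_cast; ring,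
          zpow_sub_one₀ hny, zpow_sub_one₀ hny]
      rw [p1, p2, hb]
      generalize (-y : K) ^ (-(m : ℤ)) = u
      field_simp
      ring

lemma fiblike_eq (f g : ℤ → K)
    (hf : ∀ n : ℤ, f (n + 2) = x * f (n + 1) + y * f n)
    (hg : ∀ n : ℤ, g (n + 2) = x * g (n + 1) + y * g n)
    (h0 : f 0 = g 0) (h1 : f 1 = g 1) : ∀ n : ℤ, f n = g n := by
  have key : ∀ n : ℤ, f n = g n ∧ f (n + 1) = g (n + 1) := by
    intro n
    induction n using Int.induction_on with
    | zero => exact ⟨h0, h1⟩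
    | succ m ih =>
      refine ⟨ih.2, ?_⟩
      have := hf m
      have := hg m
      rw [show (m:ℤ) + 1 + 1 = m + 2 by ring, hf m, hg m, ih.1, ih.2]
    | pred m ih =>
      refine ⟨?_, by rw [show -(m:ℤ) - 1 + 1 = -m by ring]; exact ih.1⟩
      have hfm := hf (-(m:ℤ) - 1)
      have hgm := hg (-(m:ℤ) - 1)
      rw [show -(m:ℤ) - 1 + 2 = -m + 1 by ring, show -(m:ℤ) - 1 + 1 = -m by ring] at hfm hgm
      rw [ih.1, ih.2] at hfm
      have : y * f (-(m:ℤ) - 1) = y * g (-(m:ℤ) - 1) := by linear_combination hgm - hfm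
      exact mul_left_cancel₀ hy this
  exact fun n => (key n).1

lemma zF_neg (n : ℤ) : zF x y (-n) = -(-y) ^ (-n) * zF x y n := by
  have hny : (-y : K) ≠ 0 := neg_ne_zero.mpr hy
  obtain ⟨m, rfl | rfl⟩ := Int.eq_nat_or_neg n
  · rw [zF_neg_nat, zF_natCast]
  · rw [neg_neg, zF_natCast, zF_neg_nat]
    have h : (-y : K) ^ (m : ℤ) * (-y) ^ (-(m : ℤ)) = 1 := by
      rw [← zpow_add₀ hny]; simp
    linear_combination (-(bF x y m)) * h

lemma key_id (a b : ℤ) :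
    zL x y a * zF x y b = zF x y (a + b) + (-y) ^ a * zF x y (b - a) := by
  have hny : (-y : K) ≠ 0 := neg_ne_zero.mpr hy
  refine fiblike_eq x y hy (fun a => zL x y a * zF x y b)
    (fun a => zF x y (a + b) + (-y) ^ a * zF x y (b - a)) ?_ ?_ ?_ ?_ a
  · intro n
    show zL x y (n + 2) * zF x y b = x * (zL x y (n + 1) * zF x y b) + y * (zL x y n * zF x y b)
    rw [zL_rec x y hy n]; ring
  · intro n
    have h1 : zF x y (n + 2 + b) = x * zF x y (n + 1 + b) + y * zF x y (n + b) := by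
      have := zF_rec x y hy (n + b)
      rw [show n + b + 2 = n + 2 + b by ring, show n + b + 1 = n + 1 + b by ring] at this
      exact this
    have h2 : zF x y (b - n) = x * zF x y (b - n - 1) + y * zF x y (b - (n + 2)) := by
      have := zF_rec x y hy (b - (n + 2))
      rw [show b - (n + 2) + 2 = b - n by ring, show b - (n + 2) + 1 = b - n - 1 by ring] at this
      exact this
    have p1 : (-y : K) ^ (n + 1) = (-y) ^ n * (-y) := by
      rw [zpow_add_one₀ hny]
    have p2 : (-y : K) ^ (n + 2) = (-y) ^ n * (-y) * (-y) := by
      rw [show n + 2 = n + 1 + 1 by ring, zpow_add_one₀ hny, p1]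
    show zF x y (n + 2 + b) + (-y) ^ (n + 2) * zF x y (b - (n + 2)) =
      x * (zF x y (n + 1 + b) + (-y) ^ (n + 1) * zF x y (b - (n + 1))) +
      y * (zF x y (n + b) + (-y) ^ n * zF x y (b - n))
    rw [h1, p1, p2, show b - (n + 1) = b - n - 1 by ring]
    linear_combination (-((-y) ^ n * y)) * h2
  · show zL x y 0 * zF x y b = zF x y (0 + b) + (-y) ^ (0:ℤ) * zF x y (b - 0)
    have h0 : zL x y 0 = 2 := by simp [zL, bL]
    rw [h0, zero_add, sub_zero, zpow_zero]
    ring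
  · have h := zF_rec x y hy (b - 1)
    rw [show b - 1 + 2 = 1 + b by ring, show b - 1 + 1 = b by ring] at h
    have h1 : zL x y 1 = x := by simp [zL, bL]
    show zL x y 1 * zF x y b = zF x y (1 + b) + (-y) ^ (1:ℤ) * zF x y (b - 1)
    rw [h1, zpow_one, h]
    ring

theorem lucas_fib_index_reduction_special' (M N k : ℤ) :
    zL x y M * zF x y N - zL x y (M + k) * zF x y (N - k) =
      (-y) ^ (N - k) * zL x y (M + k - N) * zF x y k := by
  have hny : (-y : K) ≠ 0 := neg_ne_zero.mpr hy
  rw [key_id x y hy M N, key_id x y hy (M + k) (N - k), mul_assoc,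
    key_id x y hy (M + k - N) k]
  rw [show M + k + (N - k) = M + N by ring,
    show N - k - (M + k) = N - M - 2 * k by ring,
    show M + k - N + k = M + 2 * k - N by ring,
    show k - (M + k - N) = N - M by ring]
  have hB := zF_neg x y hy (M + 2 * k - N)
  rw [show -(M + 2 * k - N) = N - M - 2 * k by ring] at hB
  have pA : (-y : K) ^ (N - k) * (-y) ^ (M + k - N) = (-y) ^ M := by
    rw [← zpow_add₀ hny]; congr 1; ring
  have pC : (-y : K) ^ (M + k) * (-y) ^ (N - M - 2 * k) = (-y) ^ (N - k) := by
    rw [← zpow_add₀ hny]; congr 1; ring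
  linear_combination (-(zF x y (N - M))) * pA + (zF x y (M + 2 * k - N)) * pC +
    (-((-y : K) ^ (M + k))) * hB

end Aux

/-- L_M F_N − L_{M+K} F_{N−K} = (−y)^{N−K} L_{M+K−N} F_K. -/
theorem lucas_fib_index_reduction_special {K : Type*} [Field K] (x y : K) (hy : y ≠ 0)
    (M N k : ℤ) :
    zL x y M * zF x y N - zL x y (M + k) * zF x y (N - k) =
      (-y) ^ (N - k) * zL x y (M + k - N) * zF x y k :=
  lucas_fib_index_reduction_special' x y hy M N k
end

section
/- For all s ≥ 1 and n ≥ 0, F_{sn}(x,y)² = F_s(x,y)² · ( C(n+1,2)_{F_s(x,y)} + (−y)^s · C(n,2)_{F_s(x,y)} ), where C(m,2)_{F_s} = F_{sm}(x,y)·F_{s(m−1)}(x,y)/(F_s(x,y)·F_{2s}(x,y)) for m ≥ 2 and C(m,2)=0 for m < 2. -/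
/-- The bivariate s-Fibopolynomial (equal to 0 when k > n, since F_0 = 0
appears in the numerator). -/
noncomputable def fibo {K : Type*} [Field K] (x y : K) (s n k : ℕ) : K :=
  (∏ i ∈ Finset.range k, bF x y (s * (n - i))) / ∏ i ∈ Finset.range k, bF x y (s * (i + 1))

/-- The field ℚ(x,y) of rational functions in two variables. -/
noncomputable abbrev RF2 : Type := FractionRing (MvPolynomial (Fin 2) ℚ)

noncomputable def Xv : RF2 := algebraMap (MvPolynomial (Fin 2) ℚ) RF2 (MvPolynomial.X 0)
noncomputable def Yv : RF2 := algebraMap (MvPolynomial (Fin 2) ℚ) RF2 (MvPolynomial.X 1)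

lemma bF_zero {K : Type*} [Field K] (x y : K) : bF x y 0 = 0 := rfl
lemma bF_one {K : Type*} [Field K] (x y : K) : bF x y 1 = 1 := rfl
lemma bF_two {K : Type*} [Field K] (x y : K) (n : ℕ) :
    bF x y (n + 2) = x * bF x y (n + 1) + y * bF x y n := rfl

lemma bF_add {K : Type*} [Field K] (x y : K) (m : ℕ) : ∀ n,
    bF x y (m + n + 1) = bF x y (m + 1) * bF x y (n + 1) + y * bF x y m * bF x y n := by
  intro n
  induction n using Nat.twoStepInduction with
  | zero => simp [bF_zero, bF_one]
  | one =>
    have : bF x y (m + 2) = x * bF x y (m + 1) + y * bF x y m := bF_two x y m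
    rw [show m + 1 + 1 = m + 2 from rfl, this]
    simp [bF_zero, bF_one, bF_two]; ring
  | more n ih1 ih2 =>
    show bF x y (m+n+3) = bF x y (m+1) * bF x y (n+3) + y * bF x y m * bF x y (n+2)
    have hg : bF x y (m+n+3) = x * bF x y (m+n+2) + y * bF x y (m+n+1) := bF_two x y (m+n+1)
    have h2 : bF x y (m+n+2) = bF x y (m+1) * bF x y (n+2) + y * bF x y m * bF x y (n+1) := ih2
    have e3 : bF x y (n+3) = x * bF x y (n+2) + y * bF x y (n+1) := bF_two x y (n+1)
    have e2 : bF x y (n+2) = x * bF x y (n+1) + y * bF x y n := bF_two x y n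
    linear_combination hg + x * h2 + y * ih1 - bF x y (m+1) * e3 - y * bF x y m * e2

lemma bF_docagne {K : Type*} [Field K] (x y : K) (c : ℕ) : ∀ s,
    (-y) ^ s * bF x y c = bF x y (c + s) * bF x y (s + 1) - bF x y (c + s + 1) * bF x y s := by
  intro s
  induction s with
  | zero => simp [bF_zero, bF_one]
  | succ s ih =>
    show (-y)^(s+1) * bF x y c = bF x y (c+s+1) * bF x y (s+2) - bF x y (c+s+2) * bF x y (s+1)
    have e1 : bF x y (s+2) = x * bF x y (s+1) + y * bF x y s := bF_two x y s
    have e2 : bF x y (c+s+2) = x * bF x y (c+s+1) + y * bF x y (c+s) := bF_two x y (c+s)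
    linear_combination (-y) * ih - bF x y (c+s+1) * e1 + bF x y (s+1) * e2

/-- Key identity: F_{c+s} F_{2s} = F_s F_{c+2s} + (-y)^s F_s F_c  (with s = t+1). -/
lemma bF_key {K : Type*} [Field K] (x y : K) (c t : ℕ) :
    bF x y (c+t+1) * bF x y (2*t+2) =
      bF x y (t+1) * bF x y (c+2*t+2) + (-y)^(t+1) * (bF x y (t+1) * bF x y c) := by
  have h1 : (-y)^(t+1) * bF x y c =
      bF x y (c+t+1) * bF x y (t+2) - bF x y (c+t+2) * bF x y (t+1) := bF_docagne x y c (t+1)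
  have h2 : bF x y (c+2*t+2) =
      bF x y (c+t+2) * bF x y (t+1) + y * bF x y (c+t+1) * bF x y t := by
    have := bF_add x y (c+t+1) t
    rw [show c+t+1+t+1 = c+2*t+2 from by omega] at this
    have e : bF x y (c+t+1+1) = bF x y (c+t+2) := rfl
    rw [e] at this
    exact this
  have h3 : bF x y (2*t+2) =
      bF x y (t+2) * bF x y (t+1) + y * bF x y (t+1) * bF x y t := by
    have := bF_add x y (t+1) t
    rw [show t+1+t+1 = 2*t+2 from by omega] at this
    have e : bF x y (t+1+1) = bF x y (t+2) := rfl
    rw [e] at this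
    exact this
  linear_combination bF x y (c+t+1) * h3 - bF x y (t+1) * h2 - bF x y (t+1) * h1

/-- Ring-valued version of bF, used to transfer nonvanishing from polynomials. -/
def bR {R : Type*} [CommRing R] (x y : R) : ℕ → R
  | 0 => 0
  | 1 => 1
  | n + 2 => x * bR x y (n + 1) + y * bR x y n

lemma bF_eq_bR {K : Type*} [Field K] (x y : K) : ∀ n, bF x y n = bR x y n := by
  intro n
  induction n using Nat.twoStepInduction with
  | zero => rfl
  | one => rfl
  | more n ih1 ih2 => show x * bF x y (n+1) + y * bF x y n = x * bR x y (n+1) + y * bR x y n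
                      rw [ih1, ih2]

lemma map_bR {R S : Type*} [CommRing R] [CommRing S] (f : R →+* S) (x y : R) : ∀ n,
    f (bR x y n) = bR (f x) (f y) n := by
  intro n
  induction n using Nat.twoStepInduction with
  | zero => simp [bR]
  | one => simp [bR]
  | more n ih1 ih2 =>
    show f (x * bR x y (n+1) + y * bR x y n) = f x * bR (f x) (f y) (n+1) + f y * bR (f x) (f y) n
    rw [map_add, map_mul, map_mul, ih1, ih2]

lemma bR_one_zero : ∀ k, bR (1 : ℚ) 0 (k + 1) = 1 := by
  intro k
  induction k with
  | zero => rfl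
  | succ k ih => show 1 * bR (1:ℚ) 0 (k+1) + 0 * bR (1:ℚ) 0 k = 1
                 rw [ih]; ring

lemma bF_ne_zero (k : ℕ) : bF Xv Yv (k + 1) ≠ 0 := by
  have hmap : bF Xv Yv (k+1)
      = algebraMap (MvPolynomial (Fin 2) ℚ) RF2 (bR (MvPolynomial.X 0) (MvPolynomial.X 1) (k+1)) := by
    rw [bF_eq_bR, Xv, Yv, ← map_bR]
  rw [hmap]
  rw [map_ne_zero_iff _ (IsFractionRing.injective (MvPolynomial (Fin 2) ℚ) RF2)]
  intro h
  have h2 : bR ((MvPolynomial.eval (fun i : Fin 2 => if i = 0 then (1:ℚ) else 0)) (MvPolynomial.X 0))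
      ((MvPolynomial.eval (fun i : Fin 2 => if i = 0 then (1:ℚ) else 0)) (MvPolynomial.X 1)) (k+1) = 0 := by
    rw [← map_bR, h, map_zero]
  simp only [MvPolynomial.eval_X, if_pos rfl] at h2
  norm_num at h2
  rw [bR_one_zero] at h2
  exact one_ne_zero h2

lemma fibo_two {K : Type*} [Field K] (x y : K) (s n : ℕ) :
    fibo x y s n 2 = (bF x y (s*n) * bF x y (s*(n-1))) / (bF x y (s*1) * bF x y (s*2)) := by
  unfold fibo
  rw [Finset.prod_range_succ, Finset.prod_range_one, Finset.prod_range_succ, Finset.prod_range_one]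
  norm_num

/-- F_{sn}² = F_s² · ( C(n+1,2)_{F_s} + (−y)^s C(n,2)_{F_s} ). -/
theorem fib_sq_as_fibopolynomials (s n : ℕ) (hs : 1 ≤ s) :
    bF Xv Yv (s * n) ^ 2 =
      bF Xv Yv s ^ 2 * (fibo Xv Yv s (n + 1) 2 + (-Yv) ^ s * fibo Xv Yv s n 2) := by
  obtain ⟨t, rfl⟩ : ∃ t, s = t + 1 := ⟨s - 1, by omega⟩
  cases n with
  | zero =>
    simp [fibo_two, bF_zero, Nat.mul_zero]
  | succ m =>
    have hkey := bF_key Xv Yv ((t+1)*m) t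
    rw [show (t+1)*m + t + 1 = (t+1)*(m+1) from by ring,
        show (t+1)*m + 2*t + 2 = (t+1)*(m+2) from by ring] at hkey
    have h1 : bF Xv Yv (t+1) ≠ 0 := bF_ne_zero t
    have h2 : bF Xv Yv (2*t+2) ≠ 0 := bF_ne_zero (2*t+1)
    rw [fibo_two, fibo_two,
        show m + 1 + 1 - 1 = m + 1 from rfl, show m + 1 - 1 = m from rfl,
        show (t+1)*1 = t+1 from by ring, show (t+1)*2 = 2*t+2 from by ring,
        show m + 1 + 1 = m + 2 from rfl]
    field_simp
    linear_combination (bF Xv Yv ((t+1)*(m+1))) * hkey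
end
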